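/- For every integers d ≥ ℓ ≥ 0 with d ≡ ℓ (mod 2) and d ≥ 1, let θ be uniformly distributed over the 2d equally spaced angles {0, π/d, 2π/d, …, (2d−1)π/d}. There exists a function φ : [0, 2π) → ℝ such that E[|φ(θ)|] = |C(d,ℓ)| and E[φ(θ)·cos^k(θ)] = 1 if k = ℓ and E[φ(θ)·cos^k(θ)] = 0 for all integers k with 0 ≤ k ≤ d+1 and k ≠ ℓ. -/

import Mathlib

/-- `C(d, ℓ)`: the coefficient of `z^ℓ` in the degree-`d` Chebyshev polynomial `T_d`. -/
noncomputable def chebCoeff (d ℓ : ℕ) : ℝ := (Polynomial.Chebyshev.T ℝ (d : ℤ)).coeff ℓ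

open Polynomial Finset

namespace Stmt7Aux

lemma symm_prod_coeff (n : ℕ) : ∀ (S : Multiset ℝ), Multiset.card S ≤ n →
    S.map (fun a => -a) = S →
    ((S.map (fun a => X - C a)).prod.natDegree ≤ Multiset.card S) ∧
    (∀ m : ℕ, (m + Multiset.card S) % 2 = 1 → (S.map (fun a => X - C a)).prod.coeff m = 0) ∧
    (∀ r : ℕ, 2 * r ≤ Multiset.card S →
      0 ≤ (-1 : ℝ) ^ r * (S.map (fun a => X - C a)).prod.coeff (Multiset.card S - 2 * r)) := by
  induction n with
  | zero =>
    intro S hcard _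
    have hS : S = 0 := Multiset.card_eq_zero.mp (by omega)
    subst hS
    refine ⟨by simp, ?_, ?_⟩
    · intro m hm
      simp only [Multiset.card_zero, Nat.add_zero] at hm
      have : m ≠ 0 := by omega
      simp [coeff_one, this]
    · intro r hr
      have : r = 0 := by simpa using hr
      subst this
      simp
  | succ n ih =>
    intro S hcard hsym
    by_cases hz : ∀ a ∈ S, a = (0 : ℝ)
    · -- all elements are zero : product is X ^ card
      have hrep : S = Multiset.replicate (Multiset.card S) (0 : ℝ) :=
        Multiset.eq_replicate_card.mpr hz
      set c := Multiset.card S with hc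
      have hprod : (S.map (fun a => X - C a)).prod = (X : ℝ[X]) ^ c := by
        rw [hrep]
        simp [Multiset.map_replicate, Multiset.prod_replicate]
      refine ⟨?_, ?_, ?_⟩
      · rw [hprod]; simp
      · intro m hm
        rw [hprod, coeff_X_pow]
        have : m ≠ c := by omega
        simp [this]
      · intro r hr
        rw [hprod, coeff_X_pow]
        rcases Nat.eq_zero_or_pos r with h0 | h0
        · subst h0; simp
        · have : c - 2 * r ≠ c := by omega
          simp [this]
    · -- there is a nonzero element; extract the pair {a, -a}
      push_neg at hz
      obtain ⟨a, haS, ha⟩ := hz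
      have hcnt : ∀ b : ℝ, S.count (-b) = S.count b := by
        intro b
        conv_lhs => rw [← hsym]
        exact Multiset.count_map_eq_count' _ S neg_injective b
      have hne : -a ≠ a := by
        intro h
        apply ha
        linarith [h]
      have hmem : -a ∈ S.erase a := by
        rw [← Multiset.count_pos, Multiset.count_erase_of_ne hne, hcnt a]
        exact Multiset.count_pos.mpr haS
      set S' := (S.erase a).erase (-a) with hS'
      have hcons : S = a ::ₘ (-a) ::ₘ S' := by
        rw [hS', Multiset.cons_erase hmem, Multiset.cons_erase haS]
      have hcardS : Multiset.card S = Multiset.card S' + 2 := by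
        simp [hcons]
      have hsym' : S'.map (fun x => -x) = S' := by
        have h1 : S.map (fun x => -x) = (-a) ::ₘ a ::ₘ S'.map (fun x => -x) := by
          rw [hcons]; simp
        have h2 : (-a) ::ₘ a ::ₘ S'.map (fun x => -x) = a ::ₘ (-a) ::ₘ S' := by
          rw [← h1, hsym, hcons]
        rw [Multiset.cons_swap] at h2
        have h3 := (Multiset.cons_inj_right (a := a)).mp h2
        exact (Multiset.cons_inj_right (a := -a)).mp h3
      obtain ⟨ihdeg, ihpar, ihsgn⟩ := ih S' (by omega) hsym'
      set P' := (S'.map (fun a => X - C a)).prod with hP'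
      have hPfac : (S.map (fun a => X - C a)).prod = (X ^ 2 - C (a ^ 2)) * P' := by
        rw [hcons]
        simp only [Multiset.map_cons, Multiset.prod_cons]
        rw [← mul_assoc]
        congr 1
        rw [map_neg, map_pow]
        ring
      have hcoeff : ∀ m : ℕ, ((S.map (fun a => X - C a)).prod).coeff m =
          (if 2 ≤ m then P'.coeff (m - 2) else 0) - a ^ 2 * P'.coeff m := by
        intro m
        rw [hPfac, sub_mul, coeff_sub, coeff_X_pow_mul', coeff_C_mul]
      refine ⟨?_, ?_, ?_⟩
      · rw [hPfac, hcardS]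
        refine le_trans natDegree_mul_le ?_
        have : (X ^ 2 - C (a ^ 2) : ℝ[X]).natDegree ≤ 2 := by
          refine le_trans (natDegree_sub_le _ _) ?_
          simp
        omega
      · intro m hm
        rw [hcoeff m]
        rw [hcardS] at hm
        have t2 : P'.coeff m = 0 := ihpar m (by omega)
        rcases le_or_gt 2 m with h2 | h2
        · have t1 : P'.coeff (m - 2) = 0 := ihpar (m - 2) (by omega)
          simp [h2, t1, t2]
        · have : ¬ (2 ≤ m) := by omega
          simp [this, t2]
      · intro r hr
        rw [hcardS] at hr ⊢
        rw [hcoeff _]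
        rcases Nat.eq_zero_or_pos r with h0 | h0
        · subst h0
          have hidx : Multiset.card S' + 2 - 2 * 0 = Multiset.card S' + 2 := by omega
          rw [hidx]
          have h2 : 2 ≤ Multiset.card S' + 2 := by omega
          rw [if_pos h2]
          have hhigh : P'.coeff (Multiset.card S' + 2) = 0 := by
            apply coeff_eq_zero_of_natDegree_lt; omega
          have := ihsgn 0 (by omega)
          simpa [hhigh] using this
        · obtain ⟨r', rfl⟩ : ∃ r', r = r' + 1 := ⟨r - 1, by omega⟩
          have hr' : 2 * r' ≤ Multiset.card S' := by omega
          have key2 := ihsgn r' hr'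
          rcases le_or_gt (2 * (r' + 1)) (Multiset.card S') with hcase | hcase
          · -- m ≥ 2
            have key1 := ihsgn (r' + 1) hcase
            have hm2 : 2 ≤ Multiset.card S' + 2 - 2 * (r' + 1) := by omega
            rw [if_pos hm2]
            have e1 : Multiset.card S' + 2 - 2 * (r' + 1) - 2 = Multiset.card S' - 2 * (r' + 1) := by omega
            have e2 : Multiset.card S' + 2 - 2 * (r' + 1) = Multiset.card S' - 2 * r' := by omega
            rw [e1, e2]
            have hsq : (0:ℝ) ≤ a ^ 2 := sq_nonneg a
            rw [pow_succ] at *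
            nlinarith [key1, key2, hsq]
          · -- m ≤ 1
            have hmle : ¬ (2 ≤ Multiset.card S' + 2 - 2 * (r' + 1)) := by omega
            rw [if_neg hmle]
            have e2 : Multiset.card S' + 2 - 2 * (r' + 1) = Multiset.card S' - 2 * r' := by omega
            rw [e2]
            have hsq : (0:ℝ) ≤ a ^ 2 := sq_nonneg a
            rw [pow_succ]
            nlinarith [key2, hsq]
lemma natDegree_T_le (n : ℕ) : (Polynomial.Chebyshev.T ℝ (n : ℤ)).natDegree ≤ n := by
  induction n using Nat.strong_induction_on with
  | _ n ih =>
    match n with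
    | 0 => simp [Polynomial.Chebyshev.T_zero]
    | 1 => simpa [Polynomial.Chebyshev.T_one] using natDegree_X_le
    | (n+2) =>
      have h2 : ((n+2 : ℕ) : ℤ) = (n : ℤ) + 2 := by push_cast; ring
      have h1 : ((n+1 : ℕ) : ℤ) = (n : ℤ) + 1 := by push_cast; ring
      rw [h2, Polynomial.Chebyshev.T_add_two]
      refine le_trans (natDegree_sub_le _ _) ?_
      have b1 : (2 * X * Polynomial.Chebyshev.T ℝ ((n:ℤ)+1)).natDegree ≤ n + 2 := by
        refine le_trans (natDegree_mul_le) ?_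
        have : (2 * X : ℝ[X]).natDegree ≤ 1 := by
          refine le_trans (natDegree_mul_le) ?_
          simp
        have hT : (Polynomial.Chebyshev.T ℝ ((n:ℤ)+1)).natDegree ≤ n + 1 := by
          rw [← h1]; exact ih (n+1) (by omega)
        omega
      have b2 : (Polynomial.Chebyshev.T ℝ (n:ℤ)).natDegree ≤ n := ih n (by omega)
      simp only [max_le_iff]
      exact ⟨b1, by omega⟩

variable {d : ℕ}

noncomputable def nodes (d : ℕ) (i : ℕ) : ℝ := Real.cos (i * Real.pi / d)

lemma nodes_mem (hd : 1 ≤ d) {i : ℕ} (hi : i ≤ d) :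
    (i * Real.pi / d : ℝ) ∈ Set.Icc 0 Real.pi := by
  constructor
  · positivity
  · rw [div_le_iff₀ (by positivity)]
    have h1 : (i : ℝ) ≤ d := by exact_mod_cast hi
    nlinarith [Real.pi_pos]

lemma nodes_strictAnti (hd : 1 ≤ d) {i j : ℕ} (hij : i < j) (hj : j ≤ d) :
    nodes d j < nodes d i := by
  have hd0 : (0:ℝ) < d := by exact_mod_cast hd
  apply Real.strictAntiOn_cos (nodes_mem hd (by omega)) (nodes_mem hd hj)
  have hij' : (i:ℝ) < j := by exact_mod_cast hij
  apply (div_lt_div_iff_of_pos_right hd0).mpr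
  exact mul_lt_mul_of_pos_right hij' Real.pi_pos

lemma nodes_injOn (hd : 1 ≤ d) : Set.InjOn (nodes d) (range (d+1)) := by
  intro i hi j hj hij
  simp only [coe_range, Set.mem_Iio] at hi hj
  by_contra hne
  rcases Nat.lt_or_ge i j with h | h
  · exact absurd hij (ne_of_gt (nodes_strictAnti hd h (by omega)))
  · have hji : j < i := by omega
    exact absurd hij (ne_of_gt (nodes_strictAnti hd hji (by omega))).symm

lemma nodes_reflect (hd : 1 ≤ d) {i : ℕ} (hi : i ≤ d) :
    nodes d (d - i) = - nodes d i := by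
  unfold nodes
  have hcast : ((d - i : ℕ) : ℝ) = (d : ℝ) - i := by
    rw [Nat.cast_sub hi]
  rw [hcast]
  have hd0 : (d:ℝ) ≠ 0 := by positivity
  have harg : ((d:ℝ) - i) * Real.pi / d = (1:ℕ) * Real.pi - i * Real.pi / d := by
    field_simp; ring
  rw [harg, Real.cos_nat_mul_pi_sub]
  simp


lemma multiset_sym (hd : 1 ≤ d) (E : Finset ℕ) (hE1 : ∀ j ∈ E, j ≤ d)
    (hE2 : ∀ j ∈ E, d - j ∈ E) :
    (E.val.map (nodes d)).map (fun a => -a) = E.val.map (nodes d) := by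
  rw [Multiset.map_map]
  have step1 : E.val.map ((fun a => -a) ∘ nodes d) = E.val.map (fun j => nodes d (d - j)) := by
    apply Multiset.map_congr rfl
    intro j hj
    simp only [Function.comp_apply]
    rw [nodes_reflect hd (hE1 j hj)]
  rw [step1]
  have step2 : E.val.map (fun j => nodes d (d - j)) = (E.val.map (fun j => d - j)).map (nodes d) := by
    rw [Multiset.map_map]; rfl
  rw [step2]
  have hinj : Set.InjOn (fun j => d - j) E := by
    intro a ha b hb hab
    have h1 := hE1 a ha
    have h2 := hE1 b hb
    simp only at hab
    omega
  have himg : E.image (fun j => d - j) = E := by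
    ext b
    simp only [Finset.mem_image]
    constructor
    · rintro ⟨j, hj, rfl⟩; exact hE2 j hj
    · intro hb
      exact ⟨d - b, hE2 b hb, by have := hE1 b hb; omega⟩
  have := Finset.image_val_of_injOn hinj
  rw [himg] at this
  rw [← this]

lemma prod_finset_eq (E : Finset ℕ) (g : ℕ → ℝ) :
    ∏ j ∈ E, (X - C (g j)) = ((E.val.map g).map (fun a => X - C a)).prod := by
  rw [Multiset.map_map, Finset.prod_eq_multiset_prod]
  rfl

lemma P_coeff_zero (hd : 1 ≤ d) {ℓ : ℕ} (hld : ℓ ≤ d) (hpar : d % 2 = ℓ % 2) :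
    (∏ j ∈ range (d+1), (X - C (nodes d j))).coeff ℓ = 0 := by
  rw [prod_finset_eq]
  set S := (range (d+1)).val.map (nodes d) with hS
  have hcard : Multiset.card S = d + 1 := by simp [hS]
  have hsym : S.map (fun a => -a) = S :=
    multiset_sym hd _ (fun j hj => by simp only [Finset.mem_range] at hj; omega)
      (fun j hj => by simp only [Finset.mem_range] at hj ⊢; omega)
  have h := (symm_prod_coeff (d+1) S (by omega) hsym).2.1 ℓ (by rw [hcard]; omega)
  exact h
lemma Q_coeff_sign (hd : 1 ≤ d) {ℓ : ℕ} (hld : ℓ ≤ d) (hpar : d % 2 = ℓ % 2)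
    {i : ℕ} (hi : i ∈ range (d+1)) :
    0 ≤ (-1:ℝ)^((d-ℓ)/2) * (∏ j ∈ (range (d+1)).erase i, (X - C (nodes d j))).coeff ℓ := by
  simp only [Finset.mem_range] at hi
  by_cases hc : 2*i = d
  · -- center node
    rw [prod_finset_eq]
    set S := ((range (d+1)).erase i).val.map (nodes d) with hS
    have hcard : Multiset.card S = d := by
      rw [hS, Multiset.card_map, ← Finset.card_def,
        Finset.card_erase_of_mem (Finset.mem_range.mpr (by omega : i < d + 1)), Finset.card_range]
      omega
    have hsym : S.map (fun a => -a) = S := by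
      apply multiset_sym hd
      · intro j hj
        simp only [Finset.mem_erase, Finset.mem_range] at hj; omega
      · intro j hj
        simp only [Finset.mem_erase, Finset.mem_range] at hj ⊢; omega
    have h := (symm_prod_coeff d S (by omega) hsym).2.2 ((d-ℓ)/2) (by omega)
    rw [hcard] at h
    have hidx : d - 2 * ((d-ℓ)/2) = ℓ := by omega
    rwa [hidx] at h
  · -- off-center: split off the partner node d - i
    have hii : d - i ≠ i := by omega
    have hmem : d - i ∈ (range (d+1)).erase i := by
      simp only [Finset.mem_erase, Finset.mem_range]
      exact ⟨hii, by omega⟩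
    rw [← Finset.insert_erase hmem, Finset.prod_insert (Finset.notMem_erase _ _)]
    set E := ((range (d+1)).erase i).erase (d - i) with hE
    set B : ℝ[X] := ∏ j ∈ E, (X - C (nodes d j)) with hB
    have hcardE : E.card = d - 1 := by
      rw [hE, Finset.card_erase_of_mem hmem, Finset.card_erase_of_mem (Finset.mem_range.mpr hi)]
      simp
    have hEsym : ∀ j ∈ E, j ≤ d ∧ d - j ∈ E := by
      intro j hj
      simp only [hE, Finset.mem_erase, Finset.mem_range] at hj ⊢
      omega
    have hBfacts := symm_prod_coeff (d-1)
      (E.val.map (nodes d))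
      (by simp [hcardE])
      (multiset_sym hd E (fun j hj => (hEsym j hj).1) (fun j hj => (hEsym j hj).2))
    rw [prod_finset_eq] at hB
    have hcardS : Multiset.card (E.val.map (nodes d)) = d - 1 := by simp [hcardE]
    have hpar0 : ∀ m : ℕ, (m + (d-1)) % 2 = 1 → B.coeff m = 0 := by
      intro m hm
      rw [hB]
      have := hBfacts.2.1 m (by rw [hcardS]; omega)
      exact this
    rcases Nat.eq_zero_or_pos ℓ with h0 | h0
    · subst h0
      have hB0 : B.coeff 0 = 0 := hpar0 0 (by omega)
      rw [mul_coeff_zero, hB0, mul_zero, mul_zero]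
    · obtain ⟨ℓ', rfl⟩ : ∃ ℓ', ℓ = ℓ' + 1 := ⟨ℓ - 1, by omega⟩
      rw [show (X - C (nodes d (d - i))) * B = B * (X - C (nodes d (d - i))) from mul_comm _ _,
        coeff_mul_X_sub_C]
      have hBl : B.coeff (ℓ' + 1) = 0 := hpar0 (ℓ'+1) (by omega)
      rw [hBl, zero_mul, sub_zero]
      have h := hBfacts.2.2 ((d - (ℓ'+1))/2) (by rw [hcardS]; omega)
      rw [hcardS] at h
      have hidx : d - 1 - 2 * ((d - (ℓ'+1))/2) = ℓ' := by omega
      rw [hidx] at h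
      rw [hB]
      exact h

lemma ev_sign (hd : 1 ≤ d) {i : ℕ} (hi : i ∈ range (d+1)) :
    0 < (-1:ℝ)^i * ∏ j ∈ (range (d+1)).erase i, (nodes d i - nodes d j) := by
  simp only [Finset.mem_range] at hi
  have hsplit : (range (d+1)).erase i = range i ∪ Ico (i+1) (d+1) := by
    ext a
    simp only [Finset.mem_erase, Finset.mem_range, Finset.mem_union, Finset.mem_Ico]
    omega
  have hdis : Disjoint (range i) (Ico (i+1) (d+1)) := by
    rw [Finset.disjoint_left]
    intro a ha hb
    simp only [Finset.mem_range] at ha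
    simp only [Finset.mem_Ico] at hb
    omega
  rw [hsplit, Finset.prod_union hdis, ← mul_assoc]
  have hneg : (-1:ℝ)^i * ∏ j ∈ range i, (nodes d i - nodes d j)
      = ∏ j ∈ range i, (nodes d j - nodes d i) := by
    have hpow : (-1:ℝ)^i = ∏ _j ∈ range i, (-1:ℝ) := by
      rw [Finset.prod_const, Finset.card_range]
    rw [hpow, ← Finset.prod_mul_distrib]
    apply Finset.prod_congr rfl
    intro j _; ring
  rw [hneg]
  apply mul_pos
  · apply Finset.prod_pos
    intro j hj
    simp only [Finset.mem_range] at hj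
    have := nodes_strictAnti hd hj (by omega : i ≤ d)
    linarith
  · apply Finset.prod_pos
    intro j hj
    simp only [Finset.mem_Ico] at hj
    have := nodes_strictAnti hd (by omega : i < j) (by omega : j ≤ d)
    linarith

lemma basis_eq (i : ℕ) :
    Lagrange.basis (range (d+1)) (nodes d) i
      = C ((∏ j ∈ (range (d+1)).erase i, (nodes d i - nodes d j))⁻¹)
        * ∏ j ∈ (range (d+1)).erase i, (X - C (nodes d j)) := by
  unfold Lagrange.basis Lagrange.basisDivisor
  rw [Finset.prod_mul_distrib]
  congr 1
  rw [← Finset.prod_inv_distrib, map_prod]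

noncomputable def lam (d ℓ : ℕ) (i : ℕ) : ℝ :=
  (Lagrange.basis (range (d+1)) (nodes d) i).coeff ℓ

lemma coeff_interpolate (ℓ : ℕ) (r : ℕ → ℝ) :
    (Lagrange.interpolate (range (d+1)) (nodes d) r).coeff ℓ
      = ∑ i ∈ range (d+1), r i * lam d ℓ i := by
  rw [Lagrange.interpolate_apply, finset_sum_coeff]
  exact Finset.sum_congr rfl fun i _ => by rw [coeff_C_mul]; rfl

lemma moment_le_d (hd : 1 ≤ d) (ℓ : ℕ) {k : ℕ} (hk : k ≤ d) :
    ∑ i ∈ range (d+1), lam d ℓ i * nodes d i ^ k = if k = ℓ then 1 else 0 := by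
  have hdeg : ((X : ℝ[X]) ^ k).degree < (range (d+1)).card := by
    rw [degree_X_pow, card_range]
    exact_mod_cast (by omega : k < d+1)
  have heq := Lagrange.eq_interpolate (f := (X:ℝ[X])^k) (nodes_injOn hd) hdeg
  have hco := congrArg (fun p => p.coeff ℓ) heq
  rw [coeff_interpolate, coeff_X_pow] at hco
  have : ∑ i ∈ range (d+1), eval (nodes d i) ((X:ℝ[X])^k) * lam d ℓ i
      = ∑ i ∈ range (d+1), lam d ℓ i * nodes d i ^ k := by
    apply Finset.sum_congr rfl
    intro i _
    rw [eval_pow, eval_X]; ring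
  rw [this] at hco
  rw [← hco]
  by_cases h : k = ℓ
  · subst h; simp
  · rw [if_neg h, if_neg (fun hh => h hh.symm)]

lemma moment_top (hd : 1 ≤ d) {ℓ : ℕ} (hld : ℓ ≤ d) (hpar : d % 2 = ℓ % 2) :
    ∑ i ∈ range (d+1), lam d ℓ i * nodes d i ^ (d+1) = 0 := by
  set P : ℝ[X] := ∏ j ∈ range (d+1), (X - C (nodes d j)) with hP
  have hmonic : P.Monic := monic_prod_of_monic _ _ fun j _ => monic_X_sub_C _
  have hdegP : P.natDegree = d + 1 := by
    rw [hP, natDegree_prod _ _ (fun j _ => X_sub_C_ne_zero (nodes d j))]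
    simp [natDegree_X_sub_C]
  have hdeg2 : P.degree = ((d+1 : ℕ) : WithBot ℕ) := by
    rw [degree_eq_natDegree hmonic.ne_zero, hdegP]
  have hsub : ((X:ℝ[X]) ^ (d+1) - P).degree < ((range (d+1)).card : WithBot ℕ) := by
    rw [card_range]
    have hlt := degree_sub_lt (p := (X:ℝ[X])^(d+1)) (q := P)
      (by rw [degree_X_pow, hdeg2])
      (pow_ne_zero _ X_ne_zero)
      (by rw [leadingCoeff_X_pow, hmonic.leadingCoeff])
    rw [degree_X_pow] at hlt
    exact_mod_cast hlt
  have heval : ∀ i ∈ range (d+1), ((X:ℝ[X])^(d+1) - P).eval (nodes d i) = nodes d i ^ (d+1) := by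
    intro i hi
    have hPz : P.eval (nodes d i) = 0 := by
      rw [hP, eval_prod]
      apply Finset.prod_eq_zero hi
      simp
    simp [hPz]
  have heq := Lagrange.eq_interpolate_of_eval_eq (fun i => nodes d i ^ (d+1))
    (nodes_injOn hd) hsub heval
  have hco := congrArg (fun p => p.coeff ℓ) heq
  rw [coeff_interpolate] at hco
  rw [coeff_sub, coeff_X_pow, P_coeff_zero hd hld hpar] at hco
  have hne : ¬ (ℓ = d + 1) := by omega
  rw [if_neg hne] at hco
  simp only [sub_zero] at hco
  have hflip : ∑ i ∈ range (d+1), lam d ℓ i * nodes d i ^ (d+1)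
      = ∑ i ∈ range (d+1), nodes d i ^ (d+1) * lam d ℓ i := by
    apply Finset.sum_congr rfl
    intro i _
    ring
  rw [hflip]
  exact hco.symm

lemma moment_all (hd : 1 ≤ d) {ℓ : ℕ} (hld : ℓ ≤ d) (hpar : d % 2 = ℓ % 2)
    {k : ℕ} (hk : k ≤ d + 1) :
    ∑ i ∈ range (d+1), lam d ℓ i * nodes d i ^ k = if k = ℓ then 1 else 0 := by
  rcases le_or_gt k d with h | h
  · exact moment_le_d hd ℓ h
  · have hkd : k = d + 1 := by omega
    subst hkd
    rw [moment_top hd hld hpar, if_neg (by omega)]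

lemma nodes_eval_T (hd : 1 ≤ d) {i : ℕ} :
    (Polynomial.Chebyshev.T ℝ (d : ℤ)).eval (nodes d i) = (-1:ℝ)^i := by
  unfold nodes
  rw [Polynomial.Chebyshev.T_real_cos]
  have hd0 : (d:ℝ) ≠ 0 := by positivity
  have harg : ((d:ℤ):ℝ) * ((i:ℝ) * Real.pi / d) = (i:ℝ) * Real.pi - 0 := by
    push_cast; field_simp; ring
  rw [harg, Real.cos_nat_mul_pi_sub]
  simp

lemma sum_lam_alt (hd : 1 ≤ d) {ℓ : ℕ} (hld : ℓ ≤ d) :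
    ∑ i ∈ range (d+1), lam d ℓ i * (-1:ℝ)^i = chebCoeff d ℓ := by
  have hdegT : (Polynomial.Chebyshev.T ℝ (d:ℤ)).natDegree < d + 1 :=
    lt_of_le_of_lt (natDegree_T_le d) (by omega)
  have h1 : ∀ i ∈ range (d+1), lam d ℓ i * (-1:ℝ)^i
      = ∑ k ∈ range (d+1), (Polynomial.Chebyshev.T ℝ (d:ℤ)).coeff k * (lam d ℓ i * nodes d i ^ k) := by
    intro i _
    rw [← nodes_eval_T hd (i := i), eval_eq_sum_range' hdegT (nodes d i), Finset.mul_sum]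
    apply Finset.sum_congr rfl
    intro k _
    ring
  rw [Finset.sum_congr rfl h1, Finset.sum_comm]
  have h2 : ∀ k ∈ range (d+1),
      ∑ i ∈ range (d+1), (Polynomial.Chebyshev.T ℝ (d:ℤ)).coeff k * (lam d ℓ i * nodes d i ^ k)
      = (Polynomial.Chebyshev.T ℝ (d:ℤ)).coeff k * (if k = ℓ then 1 else 0) := by
    intro k hk
    simp only [Finset.mem_range] at hk
    rw [← Finset.mul_sum, moment_le_d hd ℓ (by omega)]
  rw [Finset.sum_congr rfl h2]
  have h3 : ∀ k ∈ range (d+1),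
      (Polynomial.Chebyshev.T ℝ (d:ℤ)).coeff k * (if k = ℓ then 1 else 0)
      = if k = ℓ then (Polynomial.Chebyshev.T ℝ (d:ℤ)).coeff k else 0 := by
    intro k _
    split <;> ring
  rw [Finset.sum_congr rfl h3, Finset.sum_ite_eq' (range (d+1)) ℓ]
  rw [if_pos (Finset.mem_range.mpr (by omega))]
  rfl

lemma lam_sign (hd : 1 ≤ d) {ℓ : ℕ} (hld : ℓ ≤ d) (hpar : d % 2 = ℓ % 2)
    {i : ℕ} (hi : i ∈ range (d+1)) :
    0 ≤ (-1:ℝ)^((d-ℓ)/2 + i) * lam d ℓ i := by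
  have hlam : lam d ℓ i
      = (∏ j ∈ (range (d+1)).erase i, (nodes d i - nodes d j))⁻¹
        * (∏ j ∈ (range (d+1)).erase i, (X - C (nodes d j))).coeff ℓ := by
    unfold lam
    rw [basis_eq, coeff_C_mul]
  rw [hlam]
  set e := ∏ j ∈ (range (d+1)).erase i, (nodes d i - nodes d j) with he
  set q := (∏ j ∈ (range (d+1)).erase i, (X - C (nodes d j))).coeff ℓ with hq
  have h1 : 0 < (-1:ℝ)^i * e := ev_sign hd hi
  have h2 : 0 ≤ (-1:ℝ)^((d-ℓ)/2) * q := Q_coeff_sign hd hld hpar hi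
  have hrw : (-1:ℝ)^((d-ℓ)/2 + i) * (e⁻¹ * q)
      = ((-1:ℝ)^i * e)⁻¹ * ((-1:ℝ)^((d-ℓ)/2) * q) := by
    rw [mul_inv]
    have : ((-1:ℝ)^i)⁻¹ = (-1:ℝ)^i := by
      rw [← inv_pow]; norm_num
    rw [this, pow_add]
    ring
  rw [hrw]
  exact mul_nonneg (inv_nonneg.mpr h1.le) h2


noncomputable def Ff (d ℓ : ℕ) (i : ℕ) : ℝ :=
  2*(d:ℝ) * lam d ℓ i / (if i = 0 ∨ i = d then 1 else 2)

noncomputable def phi (d ℓ : ℕ) : ℝ → ℝ := fun θ =>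
  Ff d ℓ (min ((round (θ * d / Real.pi)).toNat) (2*d - (round (θ * d / Real.pi)).toNat))

lemma phi_grid (hd : 1 ≤ d) (ℓ : ℕ) (j : ℕ) :
    phi d ℓ ((j:ℝ) * Real.pi / d) = Ff d ℓ (min j (2*d - j)) := by
  unfold phi
  have hd0 : (d:ℝ) ≠ 0 := by positivity
  have hpi : Real.pi ≠ 0 := Real.pi_ne_zero
  have harg : ((j:ℝ) * Real.pi / d) * d / Real.pi = ((j:ℕ):ℝ) := by field_simp
  rw [harg, round_natCast, Int.toNat_natCast]

lemma cos_grid (hd : 1 ≤ d) {j : ℕ} (hj : j < 2*d) :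
    Real.cos ((j:ℝ) * Real.pi / d) = nodes d (min j (2*d - j)) := by
  rcases le_or_gt j d with h | h
  · have hmin : min j (2*d - j) = j := by omega
    rw [hmin]; rfl
  · have hmin : min j (2*d - j) = 2*d - j := by omega
    rw [hmin]
    unfold nodes
    have hd0 : (d:ℝ) ≠ 0 := by positivity
    have hcast : ((2*d - j : ℕ) : ℝ) = 2*(d:ℝ) - (j:ℝ) := by
      rw [Nat.cast_sub (by omega : j ≤ 2*d)]
      push_cast; ring
    have harg : ((2*d - j : ℕ) : ℝ) * Real.pi / d = ((1:ℕ):ℝ) * (2*Real.pi) - (j:ℝ)*Real.pi/d := by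
      rw [hcast]; field_simp; ring
    rw [harg, Real.cos_nat_mul_two_pi_sub]

lemma reindex (hd : 1 ≤ d) (H : ℕ → ℝ) :
    ∑ j ∈ range (2*d), H (min j (2*d - j))
      = ∑ i ∈ range (d+1), (if i = 0 ∨ i = d then (1:ℝ) else 2) * H i := by
  classical
  have hsplit : range (2*d) = range (d+1) ∪ Ico (d+1) (2*d) := by
    ext a
    simp only [Finset.mem_range, Finset.mem_union, Finset.mem_Ico]
    omega
  have hdis : Disjoint (range (d+1)) (Ico (d+1) (2*d)) := by
    rw [Finset.disjoint_left]
    intro a ha hb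
    simp only [Finset.mem_range] at ha
    simp only [Finset.mem_Ico] at hb
    omega
  rw [hsplit, Finset.sum_union hdis]
  have h1 : ∑ j ∈ range (d+1), H (min j (2*d - j)) = ∑ j ∈ range (d+1), H j := by
    apply Finset.sum_congr rfl
    intro j hj
    simp only [Finset.mem_range] at hj
    congr 1
    omega
  have h2 : ∑ j ∈ Ico (d+1) (2*d), H (min j (2*d - j)) = ∑ i ∈ Ico 1 d, H i := by
    apply Finset.sum_nbij' (i := fun j => 2*d - j) (j := fun i => 2*d - i)
    · intro a ha; simp only [Finset.mem_Ico] at ha ⊢; omega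
    · intro a ha; simp only [Finset.mem_Ico] at ha ⊢; omega
    · intro a ha; simp only [Finset.mem_Ico] at ha; omega
    · intro a ha; simp only [Finset.mem_Ico] at ha; omega
    · intro a ha; simp only [Finset.mem_Ico] at ha; congr 1; omega
  rw [h1, h2]
  have h3 : ∀ i ∈ range (d+1), (if i = 0 ∨ i = d then (1:ℝ) else 2) * H i
      = H i + (if ¬ (i = 0 ∨ i = d) then H i else 0) := by
    intro i _
    by_cases h : i = 0 ∨ i = d <;> simp [h, two_mul]
  rw [Finset.sum_congr rfl h3, Finset.sum_add_distrib, ← Finset.sum_filter]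
  have h4 : (range (d+1)).filter (fun i => ¬ (i = 0 ∨ i = d)) = Ico 1 d := by
    ext a
    simp only [Finset.mem_filter, Finset.mem_range, Finset.mem_Ico]
    omega
  rw [h4]

end Stmt7Aux

/-- Existence of the filter: for `d ≥ ℓ ≥ 0` with `d ≡ ℓ (mod 2)` and `d ≥ 1`, with `θ`
uniform on the `2d` equally spaced angles `{jπ/d : j = 0,…,2d−1}`, there is
`φ : [0,2π) → ℝ` with `E[|φ(θ)|] = |C(d,ℓ)|`, `E[φ(θ) cos^ℓ(θ)] = 1`, and
`E[φ(θ) cos^k(θ)] = 0` for all `k ≤ d+1` with `k ≠ ℓ`. -/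
theorem stmt7 (d ℓ : ℕ) (hd : 1 ≤ d) (hld : ℓ ≤ d) (hpar : d % 2 = ℓ % 2) :
    ∃ φ : ℝ → ℝ,
      (∑ j ∈ Finset.range (2 * d), |φ (j * Real.pi / d)|) / (2 * d) = |chebCoeff d ℓ| ∧
      (∀ k : ℕ, k ≤ d + 1 →
        (∑ j ∈ Finset.range (2 * d),
            φ (j * Real.pi / d) * Real.cos (j * Real.pi / d) ^ k) / (2 * d) =
          if k = ℓ then 1 else 0) := by
  classical
  open Stmt7Aux in
  refine ⟨Stmt7Aux.phi d ℓ, ?_, ?_⟩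
  · -- expectation of |φ|
    have e1 : ∀ j ∈ Finset.range (2*d),
        |Stmt7Aux.phi d ℓ ((j:ℝ) * Real.pi / d)| = |Ff d ℓ (min j (2*d - j))| := by
      intro j _
      rw [phi_grid hd]
    have hre := reindex hd (fun i => |Ff d ℓ i|)
    rw [Finset.sum_congr rfl e1, hre]
    have h2dpos : (0:ℝ) < 2*(d:ℝ) := by
      have : (1:ℝ) ≤ (d:ℝ) := by exact_mod_cast hd
      linarith
    have e2 : ∀ i ∈ Finset.range (d+1),
        (if i = 0 ∨ i = d then (1:ℝ) else 2) * |Ff d ℓ i| = 2*(d:ℝ) * |lam d ℓ i| := by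
      intro i _
      unfold Stmt7Aux.Ff
      by_cases h : i = 0 ∨ i = d
      · rw [if_pos h, one_mul, div_one, abs_mul,
          abs_of_nonneg h2dpos.le]
      · rw [if_neg h, abs_div, abs_mul, abs_of_nonneg h2dpos.le]
        have : |(2:ℝ)| = 2 := by norm_num
        rw [this]
        ring
    rw [Finset.sum_congr rfl e2, ← Finset.mul_sum]
    set r := (d - ℓ)/2 with hr
    have h5 : ∀ i ∈ Finset.range (d+1),
        |lam d ℓ i| = (-1:ℝ)^r * ((-1)^i * lam d ℓ i) := by
      intro i hi
      have hs := lam_sign hd hld hpar hi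
      have hre : (-1:ℝ)^(r+i) * lam d ℓ i = (-1)^r * ((-1)^i * lam d ℓ i) := by
        rw [pow_add]; ring
      rw [hre] at hs
      calc |lam d ℓ i| = |(-1:ℝ)^r * ((-1)^i * lam d ℓ i)| := by
            rw [abs_mul, abs_mul, abs_pow, abs_pow, abs_neg, abs_one, one_pow, one_pow,
              one_mul, one_mul]
        _ = (-1:ℝ)^r * ((-1)^i * lam d ℓ i) := abs_of_nonneg hs
    have h6 : ∑ i ∈ Finset.range (d+1), (-1:ℝ)^i * lam d ℓ i = chebCoeff d ℓ := by
      rw [← sum_lam_alt hd hld]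
      apply Finset.sum_congr rfl
      intro i _
      ring
    have hA : ∑ i ∈ Finset.range (d+1), |lam d ℓ i| = (-1:ℝ)^r * chebCoeff d ℓ := by
      rw [Finset.sum_congr rfl h5, ← Finset.mul_sum, h6]
    have hnn : 0 ≤ (-1:ℝ)^r * chebCoeff d ℓ :=
      hA ▸ Finset.sum_nonneg (fun i _ => abs_nonneg _)
    have hB : (-1:ℝ)^r * chebCoeff d ℓ = |chebCoeff d ℓ| := by
      rcases Nat.even_or_odd r with he | ho
      · rw [he.neg_one_pow] at hnn ⊢
        rw [one_mul] at hnn ⊢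
        rw [abs_of_nonneg hnn]
      · rw [ho.neg_one_pow] at hnn ⊢
        have : chebCoeff d ℓ ≤ 0 := by linarith
        rw [abs_of_nonpos this]
        ring
    rw [hA, hB]
    exact mul_div_cancel_left₀ _ (ne_of_gt h2dpos)
  · -- moments
    intro k hk
    have e1 : ∀ j ∈ Finset.range (2*d),
        Stmt7Aux.phi d ℓ ((j:ℝ) * Real.pi / d) * Real.cos ((j:ℝ) * Real.pi / d) ^ k
          = Ff d ℓ (min j (2*d - j)) * nodes d (min j (2*d - j)) ^ k := by
      intro j hj
      rw [phi_grid hd, cos_grid hd (Finset.mem_range.mp hj)]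
    have hre := reindex hd (fun i => Ff d ℓ i * nodes d i ^ k)
    rw [Finset.sum_congr rfl e1, hre]
    have e2 : ∀ i ∈ Finset.range (d+1),
        (if i = 0 ∨ i = d then (1:ℝ) else 2) * (Ff d ℓ i * nodes d i ^ k)
          = 2*(d:ℝ) * (lam d ℓ i * nodes d i ^ k) := by
      intro i _
      unfold Stmt7Aux.Ff
      by_cases h : i = 0 ∨ i = d
      · rw [if_pos h]; ring
      · rw [if_neg h]; ring
    rw [Finset.sum_congr rfl e2, ← Finset.mul_sum, moment_all hd hld hpar hk]
    have h2dne : (2*(d:ℝ)) ≠ 0 := by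
      have h1d : (1:ℝ) ≤ (d:ℝ) := by exact_mod_cast hd
      positivity
    exact mul_div_cancel_left₀ _ h2dne
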